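/- Let (N,A) be a connected weighted undirected graph with symmetric nonnegative edge weights w_ij and total edge weight w = Σ_{i,j} w_ij, and let m_ij denote the mean first passage times of the random walk on (N,A). Fix nodes a, b and a subset S ⊆ N containing a and b, and consider the subgraph of (N,A) with respect to S, assumed connected, with mean first passage times m̄_ij for the random walk on the subgraph. Then m_ab + m_ba ≤ (w/w(S)) (m̄_ab + m̄_ba), where w(S) = Σ_{i∈S} Σ_{j∈N} w_ij is the total edge weight of the subgraph. -/

import Mathlib

open Matrix

noncomputable section

/-- transition matrix of the random walk on a weighted undirected graph:
`Z_ij = w_ij / Σ_k w_ik`. -/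
def walkZ {V : Type*} [Fintype V] (w : V → V → ℝ) : Matrix V V ℝ :=
  Matrix.of fun i j => w i j / ∑ k, w i k

/-- stationary distribution of the random walk: `π_i = (Σ_k w_ik)/w`, where
`w` is the total edge weight. -/
def statPi {V : Type*} [Fintype V] (w : V → V → ℝ) : V → ℝ :=
  fun i => (∑ k, w i k) / ∑ a, ∑ b, w a b

/-- the fundamental matrix `Y = Σ_{k=0}^∞ (Z^k − Z^∞)` of the random walk,
where `Z^∞ = e πᵀ`. -/
def walkY {V : Type*} [Fintype V] [DecidableEq V] (w : V → V → ℝ) : Matrix V V ℝ :=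
  Matrix.of fun i j => ∑' k : ℕ, ((walkZ w ^ k) i j - statPi w j)

/-- the mean first passage time `m_ij = (Y_jj − Y_ij)/π_j` from `i` to `j` of
the random walk on the weighted graph with weights `w`. -/
def walkM {V : Type*} [Fintype V] [DecidableEq V] (w : V → V → ℝ) (i j : V) : ℝ :=
  (walkY w j j - walkY w i j) / statPi w j

/-- `isPathOn E i j L` : there is a path of length `L` from `i` to `j` using
edges in `E`. -/
def isPathOn {V : Type*} (E : V → V → Prop) (i j : V) (L : ℕ) : Prop :=
  ∃ f : ℕ → V, f 0 = i ∧ f L = j ∧ ∀ l < L, E (f l) (f (l + 1))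

/-- the edge weights of the subgraph of a weighted graph with respect to a set
`S` of nodes: weights within `S` are kept, and for each `i ∈ S` the weights of
removed edges are folded into the self-loop weight. -/
def subW {n : ℕ} (w : Fin n → Fin n → ℝ) (S : Finset (Fin n)) :
    {x // x ∈ S} → {x // x ∈ S} → ℝ :=
  fun i j => if (i : Fin n) = (j : Fin n) then w i i + ∑ k ∈ Sᶜ, w i k else w i j

set_option linter.unusedSectionVars false
namespace S15

variable {V : Type*} [Fintype V] [DecidableEq V]

structure Nice (w : V → V → ℝ) : Prop where
  sym : ∀ i j, w i j = w j i
  nonneg : ∀ i j, 0 ≤ w i j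
  prim : ∃ k, 0 < k ∧ ∀ i j, 0 < (walkZ w ^ k) i j

def deg (w : V → V → ℝ) (i : V) : ℝ := ∑ k, w i k
def wtot (w : V → V → ℝ) : ℝ := ∑ a, ∑ b, w a b

lemma Z_apply (w : V → V → ℝ) (i j : V) : walkZ w i j = w i j / deg w i := rfl
lemma pi_def (w : V → V → ℝ) (i : V) : statPi w i = deg w i / wtot w := rfl
lemma Y_apply (w : V → V → ℝ) (i j : V) :
    walkY w i j = ∑' k : ℕ, ((walkZ w ^ k) i j - statPi w j) := rfl

variable {w : V → V → ℝ}

lemma deg_nonneg (h : Nice w) (i : V) : 0 ≤ deg w i :=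
  Finset.sum_nonneg fun k _ => h.nonneg i k

lemma deg_pos (h : Nice w) (i : V) : 0 < deg w i := by
  obtain ⟨k, hk, hpos⟩ := h.prim
  rcases Nat.exists_eq_succ_of_ne_zero hk.ne' with ⟨m, rfl⟩
  rcases (deg_nonneg h i).lt_or_eq with h' | h'
  · exact h'
  · exfalso
    have h0 : ∀ l, walkZ w i l = 0 := by
      intro l; rw [Z_apply, ← h', div_zero]
    have := hpos i i
    rw [pow_succ'] at this
    simp only [Matrix.mul_apply] at this
    simp [h0] at this

lemma Z_nonneg (h : Nice w) (i j : V) : 0 ≤ walkZ w i j :=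
  div_nonneg (h.nonneg i j) (deg_nonneg h i)

lemma Z_rowsum (h : Nice w) (i : V) : ∑ j, walkZ w i j = 1 := by
  simp only [Z_apply]
  rw [← Finset.sum_div]
  exact div_self (deg_pos h i).ne'

lemma Zpow_nonneg (h : Nice w) (k : ℕ) (i j : V) : 0 ≤ (walkZ w ^ k) i j := by
  induction k generalizing i j with
  | zero => simp [Matrix.one_apply]; positivity
  | succ m ih =>
    rw [pow_succ, Matrix.mul_apply]
    exact Finset.sum_nonneg fun l _ => mul_nonneg (ih i l) (Z_nonneg h l j)

lemma Zpow_rowsum (h : Nice w) (k : ℕ) (i : V) : ∑ j, (walkZ w ^ k) i j = 1 := by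
  induction k generalizing i with
  | zero => simp [Matrix.one_apply]
  | succ m ih =>
    rw [pow_succ]
    simp only [Matrix.mul_apply]
    rw [Finset.sum_comm]
    calc ∑ l, ∑ j, (walkZ w ^ m) i l * walkZ w l j
        = ∑ l, (walkZ w ^ m) i l * ∑ j, walkZ w l j := by
          simp [Finset.mul_sum]
      _ = 1 := by simp [Z_rowsum h, ih]

variable [Nonempty V]

lemma wtot_pos (h : Nice w) : 0 < wtot w := by
  have : wtot w = ∑ i, deg w i := rfl
  rw [this]
  exact Finset.sum_pos (fun i _ => deg_pos h i) Finset.univ_nonempty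

lemma pi_pos (h : Nice w) (j : V) : 0 < statPi w j :=
  div_pos (deg_pos h j) (wtot_pos h)

lemma deg_le_wtot (h : Nice w) (j : V) : deg w j ≤ wtot w := by
  have : wtot w = ∑ i, deg w i := rfl
  rw [this]
  exact Finset.single_le_sum (fun i _ => deg_nonneg h i) (Finset.mem_univ j)

lemma pi_le_one (h : Nice w) (j : V) : statPi w j ≤ 1 := by
  rw [pi_def]
  exact div_le_one_of_le₀ (deg_le_wtot h j) (wtot_pos h).le

lemma pi_sum (h : Nice w) : ∑ j, statPi w j = 1 := by
  simp only [pi_def]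
  rw [← Finset.sum_div]
  exact div_self (wtot_pos h).ne'

lemma pi_stat (h : Nice w) (j : V) : ∑ i, statPi w i * walkZ w i j = statPi w j := by
  have : ∀ i, statPi w i * walkZ w i j = w i j / wtot w := by
    intro i
    rw [pi_def, Z_apply, div_mul_div_comm, mul_comm (wtot w) (deg w i),
      mul_div_mul_left _ _ (deg_pos h i).ne']
  simp only [this]
  rw [← Finset.sum_div, pi_def, deg]
  congr 1
  exact Finset.sum_congr rfl fun i _ => h.sym i j

lemma pi_stat_pow (h : Nice w) (k : ℕ) (j : V) :
    ∑ i, statPi w i * (walkZ w ^ k) i j = statPi w j := by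
  induction k generalizing j with
  | zero => simp [Matrix.one_apply]
  | succ m ih =>
    rw [pow_succ]
    simp only [Matrix.mul_apply, Finset.mul_sum]
    rw [Finset.sum_comm]
    calc ∑ l, ∑ i, statPi w i * ((walkZ w ^ m) i l * walkZ w l j)
        = ∑ l, (∑ i, statPi w i * (walkZ w ^ m) i l) * walkZ w l j := by
          simp [Finset.sum_mul, mul_assoc]
      _ = ∑ l, statPi w l * walkZ w l j := by simp only [ih]
      _ = statPi w j := pi_stat h j


lemma decay (h : Nice w) :
    ∃ k0 : ℕ, 0 < k0 ∧ ∃ r : ℝ, 1/2 ≤ r ∧ r < 1 ∧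
      ∀ k i j, |(walkZ w ^ k) i j - statPi w j| ≤ r ^ (k / k0) := by
  obtain ⟨k0, hk0, hpos⟩ := h.prim
  have hne : (Finset.univ : Finset (V × V)).Nonempty := Finset.univ_nonempty
  set A := walkZ w ^ k0 with hA
  set ε : ℝ := Finset.univ.inf' hne (fun p : V × V => A p.1 p.2) with hε
  have hεle : ∀ i j, ε ≤ A i j := fun i j =>
    Finset.inf'_le _ (Finset.mem_univ (⟨i, j⟩ : V × V))
  have hεpos : 0 < ε := by
    rw [hε, Finset.lt_inf'_iff]
    exact fun p _ => hpos p.1 p.2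
  have hεone : ε ≤ 1 := by
    obtain ⟨i⟩ := ‹Nonempty V›
    calc ε ≤ A i i := hεle i i
      _ ≤ ∑ j, A i j := Finset.single_le_sum (fun j _ => Zpow_nonneg h k0 i j) (Finset.mem_univ i)
      _ = 1 := Zpow_rowsum h k0 i
  set θ : ℝ := ε / 2 with hθ
  have hθpos : 0 < θ := by positivity
  set r : ℝ := 1 - θ with hr
  have hr0 : 1/2 ≤ r := by rw [hr, hθ]; linarith
  have hr1 : r < 1 := by rw [hr]; linarith
  refine ⟨k0, hk0, r, hr0, hr1, ?_⟩
  have hB : ∀ i j, 0 ≤ A i j - θ * statPi w j := by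
    intro i j
    have h1 : θ * statPi w j ≤ θ * 1 := mul_le_mul_of_nonneg_left (pi_le_one h j) hθpos.le
    have h2 : θ ≤ ε := by rw [hθ]; linarith
    have := hεle i j
    nlinarith
  have hBsum : ∀ i, ∑ j, (A i j - θ * statPi w j) = r := by
    intro i
    rw [Finset.sum_sub_distrib, Zpow_rowsum h, ← Finset.mul_sum, pi_sum h, hr, mul_one]
  have main : ∀ m i j, |(walkZ w ^ (k0 * m)) i j - statPi w j| ≤ r ^ m := by
    intro m
    induction m with
    | zero =>
      intro i j
      simp only [Nat.mul_zero, pow_zero, Matrix.one_apply]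
      have h1 := (pi_pos h j).le
      have h2 := pi_le_one h j
      by_cases hij : i = j <;> simp [hij, abs_le] <;> constructor <;> linarith
    | succ m ih =>
      intro i j
      have hpow : walkZ w ^ (k0 * (m + 1)) = A * walkZ w ^ (k0 * m) := by
        rw [hA, ← pow_add]
        congr 1
        ring
      have hkey : (walkZ w ^ (k0 * (m + 1))) i j - statPi w j =
          ∑ l, (A i l - θ * statPi w l) * ((walkZ w ^ (k0 * m)) l j - statPi w j) := by
        have expand : ∀ l, (A i l - θ * statPi w l) * ((walkZ w ^ (k0 * m)) l j - statPi w j) =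
            A i l * (walkZ w ^ (k0 * m)) l j - A i l * statPi w j
              - θ * (statPi w l * (walkZ w ^ (k0 * m)) l j) + θ * (statPi w l * statPi w j) := by
          intro l; ring
        simp only [expand]
        rw [Finset.sum_add_distrib, Finset.sum_sub_distrib, Finset.sum_sub_distrib,
          ← Finset.sum_mul, ← Finset.mul_sum, ← Finset.mul_sum, Zpow_rowsum h,
          pi_stat_pow h, ← Finset.sum_mul, pi_sum h, hpow, Matrix.mul_apply]
        ring
      rw [hkey]
      calc |∑ l, (A i l - θ * statPi w l) * ((walkZ w ^ (k0 * m)) l j - statPi w j)|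
          ≤ ∑ l, |(A i l - θ * statPi w l) * ((walkZ w ^ (k0 * m)) l j - statPi w j)| :=
            Finset.abs_sum_le_sum_abs _ _
        _ ≤ ∑ l, (A i l - θ * statPi w l) * r ^ m := by
            apply Finset.sum_le_sum
            intro l _
            rw [abs_mul, abs_of_nonneg (hB i l)]
            exact mul_le_mul_of_nonneg_left (ih l j) (hB i l)
        _ = r * r ^ m := by rw [← Finset.sum_mul, hBsum]
        _ = r ^ (m + 1) := by ring
  intro k i j
  have hdm : k0 * (k / k0) + k % k0 = k := Nat.div_add_mod k k0
  have hpow : walkZ w ^ k = walkZ w ^ (k % k0) * walkZ w ^ (k0 * (k / k0)) := by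
    rw [← pow_add]
    congr 1
    omega
  have hkey : (walkZ w ^ k) i j - statPi w j =
      ∑ l, (walkZ w ^ (k % k0)) i l * ((walkZ w ^ (k0 * (k / k0))) l j - statPi w j) := by
    simp only [mul_sub]
    rw [Finset.sum_sub_distrib, ← Finset.sum_mul, Zpow_rowsum h, hpow, Matrix.mul_apply]
    ring
  rw [hkey]
  calc |∑ l, (walkZ w ^ (k % k0)) i l * ((walkZ w ^ (k0 * (k / k0))) l j - statPi w j)|
      ≤ ∑ l, |(walkZ w ^ (k % k0)) i l * ((walkZ w ^ (k0 * (k / k0))) l j - statPi w j)| :=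
        Finset.abs_sum_le_sum_abs _ _
    _ ≤ ∑ l, (walkZ w ^ (k % k0)) i l * r ^ (k / k0) := by
        apply Finset.sum_le_sum
        intro l _
        rw [abs_mul, abs_of_nonneg (Zpow_nonneg h _ i l)]
        exact mul_le_mul_of_nonneg_left (main _ l j) (Zpow_nonneg h _ i l)
    _ = r ^ (k / k0) := by rw [← Finset.sum_mul, Zpow_rowsum h, one_mul]

lemma summable_aux (h : Nice w) (i j : V) :
    Summable (fun k : ℕ => (walkZ w ^ k) i j - statPi w j) := by
  obtain ⟨k0, hk0, r, hr0, hr1, hdec⟩ := decay h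
  have hrpos : 0 < r := by linarith
  set ρ : ℝ := r ^ ((k0 : ℝ)⁻¹) with hρ
  have hρ0 : 0 ≤ ρ := Real.rpow_nonneg hrpos.le _
  have hρ1 : ρ < 1 := by
    apply Real.rpow_lt_one hrpos.le hr1
    positivity
  have hgeom : Summable (fun k : ℕ => r⁻¹ * ρ ^ k) :=
    (summable_geometric_of_lt_one hρ0 hρ1).mul_left _
  have hle : ∀ k : ℕ, r ^ (k / k0) ≤ r⁻¹ * ρ ^ k := by
    intro k
    have e1 : (r : ℝ) ^ (k / k0) = r ^ (((k / k0 : ℕ) : ℝ)) := by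
      rw [Real.rpow_natCast]
    have e2 : r⁻¹ * ρ ^ k = r ^ ((k : ℝ) * (k0 : ℝ)⁻¹ - 1) := by
      rw [hρ, ← Real.rpow_natCast (r ^ ((k0:ℝ)⁻¹)) k, ← Real.rpow_mul hrpos.le,
        Real.rpow_sub hrpos, Real.rpow_one, mul_comm ((k0:ℝ)⁻¹)]
      ring
    rw [e1, e2]
    apply Real.rpow_le_rpow_of_exponent_ge hrpos hr1.le
    have hk0r : (0 : ℝ) < k0 := by exact_mod_cast hk0
    have h1 := Nat.div_add_mod k k0
    have h2 := Nat.mod_lt k hk0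
    have hnat : k < k0 * (k / k0) + k0 := by linarith
    have hreal : (k : ℝ) < (k0 : ℝ) * ((k / k0 : ℕ) : ℝ) + k0 := by exact_mod_cast hnat
    have hdiv : (k : ℝ) * (k0 : ℝ)⁻¹ < ((k / k0 : ℕ) : ℝ) + 1 := by
      rw [← div_eq_mul_inv, div_lt_iff₀ hk0r]
      nlinarith
    linarith
  have hs1 : Summable (fun k : ℕ => (r : ℝ) ^ (k / k0)) :=
    Summable.of_nonneg_of_le (fun k => by positivity) hle hgeom
  apply Summable.of_abs
  exact Summable.of_nonneg_of_le (fun k => abs_nonneg _) (fun k => hdec k i j) hs1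


lemma dZpow_symm (h : Nice w) (k : ℕ) (i j : V) :
    deg w i * (walkZ w ^ k) i j = deg w j * (walkZ w ^ k) j i := by
  induction k generalizing i j with
  | zero =>
    by_cases hij : i = j
    · simp [Matrix.one_apply, hij]
    · simp [Matrix.one_apply, hij, (Ne.symm hij : j ≠ i)]
  | succ m ih =>
    have base : ∀ a b, deg w a * walkZ w a b = deg w b * walkZ w b a := by
      intro a b
      rw [Z_apply, Z_apply, mul_div_assoc', mul_div_assoc',
        mul_comm (deg w a), mul_comm (deg w b),
        mul_div_assoc, mul_div_assoc, div_self (deg_pos h a).ne',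
        div_self (deg_pos h b).ne', mul_one, mul_one, h.sym]
    conv_lhs => rw [pow_succ']
    conv_rhs => rw [pow_succ]
    rw [Matrix.mul_apply, Matrix.mul_apply, Finset.mul_sum, Finset.mul_sum]
    apply Finset.sum_congr rfl
    intro l _
    calc deg w i * (walkZ w i l * (walkZ w ^ m) l j)
        = (deg w i * walkZ w i l) * (walkZ w ^ m) l j := by ring
      _ = (deg w l * walkZ w l i) * (walkZ w ^ m) l j := by rw [base]
      _ = (deg w l * (walkZ w ^ m) l j) * walkZ w l i := by ring
      _ = (deg w j * (walkZ w ^ m) j l) * walkZ w l i := by rw [ih]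
      _ = deg w j * ((walkZ w ^ m) j l * walkZ w l i) := by ring

lemma dY_symm (h : Nice w) (i j : V) :
    deg w i * walkY w i j = deg w j * walkY w j i := by
  rw [Y_apply, Y_apply, ← tsum_mul_left, ← tsum_mul_left]
  apply tsum_congr
  intro k
  rw [mul_sub, mul_sub, dZpow_symm h]
  congr 1
  rw [pi_def, pi_def]
  ring

set_option maxHeartbeats 2000000 in
lemma Y_rel (h : Nice w) (i j : V) :
    walkY w i j - ∑ l, walkY w i l * walkZ w l j =
      (if i = j then 1 else 0) - statPi w j := by
  have hsumm : ∀ l, Summable (fun k : ℕ => ((walkZ w ^ k) i l - statPi w l) * walkZ w l j) :=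
    fun l => (summable_aux h i l).mul_right _
  have step1 : ∑ l, walkY w i l * walkZ w l j =
      ∑' k : ℕ, ∑ l, ((walkZ w ^ k) i l - statPi w l) * walkZ w l j := by
    calc ∑ l, walkY w i l * walkZ w l j
        = ∑ l, ∑' k : ℕ, ((walkZ w ^ k) i l - statPi w l) * walkZ w l j := by
          apply Finset.sum_congr rfl
          intro l _
          rw [Y_apply, tsum_mul_right]
      _ = ∑' k : ℕ, ∑ l, ((walkZ w ^ k) i l - statPi w l) * walkZ w l j :=
          (Summable.tsum_finsetSum fun l _ => hsumm l).symm
  have step2 : ∀ k : ℕ, ∑ l, ((walkZ w ^ k) i l - statPi w l) * walkZ w l j =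
      (walkZ w ^ (k + 1)) i j - statPi w j := by
    intro k
    simp only [sub_mul]
    rw [Finset.sum_sub_distrib, pi_stat h, pow_succ, Matrix.mul_apply]
  rw [step1]
  simp only [step2]
  have hsum0 : Summable (fun k : ℕ => (walkZ w ^ k) i j - statPi w j) := summable_aux h i j
  have hsum1 : Summable (fun k : ℕ => (walkZ w ^ (k + 1)) i j - statPi w j) :=
    (summable_nat_add_iff 1).mpr hsum0
  rw [Y_apply, Summable.tsum_eq_zero_add hsum0]
  simp only [pow_zero, Matrix.one_apply]
  ring

def Hm (w : V → V → ℝ) (i j : V) : ℝ := walkY w i j / deg w j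

def Lap (w : V → V → ℝ) (z : V → ℝ) (j : V) : ℝ :=
  deg w j * z j - ∑ i, w j i * z i

lemma H_symm (h : Nice w) (i j : V) : Hm w i j = Hm w j i := by
  rw [Hm, Hm, div_eq_div_iff (deg_pos h j).ne' (deg_pos h i).ne',
    mul_comm (walkY w i j), mul_comm (walkY w j i)]
  exact dY_symm h i j

lemma HL (h : Nice w) (i j : V) :
    Hm w i j * deg w j - ∑ l, Hm w i l * w l j =
      (if i = j then 1 else 0) - statPi w j := by
  have e1 : Hm w i j * deg w j = walkY w i j := by
    rw [Hm, div_mul_cancel₀ _ (deg_pos h j).ne']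
  have e2 : ∀ l, Hm w i l * w l j = walkY w i l * walkZ w l j := by
    intro l
    rw [Hm, Z_apply, div_mul_eq_mul_div, mul_div_assoc]
  rw [e1]
  simp only [e2]
  exact Y_rel h i j

lemma Lap_y (h : Nice w) (a b : V) (j : V) :
    Lap w (fun i => Hm w i a - Hm w i b) j =
      (if a = j then 1 else 0) - (if b = j then 1 else 0) := by
  have expand : Lap w (fun i => Hm w i a - Hm w i b) j =
      (Hm w a j * deg w j - ∑ l, Hm w a l * w l j)
        - (Hm w b j * deg w j - ∑ l, Hm w b l * w l j) := by
    rw [Lap]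
    have e1 : ∀ i, w j i * (Hm w i a - Hm w i b) = Hm w a i * w i j - Hm w b i * w i j := by
      intro i
      rw [H_symm h i a, H_symm h i b, h.sym j i]
      ring
    simp only [e1]
    rw [Finset.sum_sub_distrib, H_symm h j a, H_symm h j b]
    ring
  rw [expand, HL h a j, HL h b j, pi_def]
  ring

lemma Lap_symm_form (h : Nice w) (z z' : V → ℝ) :
    ∑ j, z j * Lap w z' j = ∑ j, z' j * Lap w z j := by
  simp only [Lap, mul_sub, Finset.mul_sum]
  rw [Finset.sum_sub_distrib, Finset.sum_sub_distrib]
  congr 1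
  · apply Finset.sum_congr rfl; intro j _; ring
  · rw [Finset.sum_comm]
    apply Finset.sum_congr rfl; intro j _
    apply Finset.sum_congr rfl; intro i _
    rw [h.sym j i]
    ring

lemma Lap_quad (h : Nice w) (z : V → ℝ) :
    ∑ j, z j * Lap w z j = (1/2) * ∑ i, ∑ j, w i j * (z i - z j)^2 := by
  have e1 : ∑ i, ∑ j, w i j * (z i - z j)^2 =
      ∑ i, ∑ j, (w i j * z i ^ 2 + w i j * z j ^ 2 - 2 * (w i j * (z i * z j))) := by
    apply Finset.sum_congr rfl; intro i _
    apply Finset.sum_congr rfl; intro j _; ring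
  have e2 : ∑ i, ∑ j, w i j * z i ^ 2 = ∑ i, deg w i * z i ^ 2 := by
    apply Finset.sum_congr rfl; intro i _
    rw [deg, ← Finset.sum_mul]
  have e3 : ∑ i, ∑ j, w i j * z j ^ 2 = ∑ i, deg w i * z i ^ 2 := by
    rw [Finset.sum_comm]
    apply Finset.sum_congr rfl; intro j _
    rw [deg, ← Finset.sum_mul]
    congr 1
    exact Finset.sum_congr rfl fun i _ => h.sym i j
  have e4 : ∑ j, z j * Lap w z j =
      ∑ j, deg w j * z j ^ 2 - ∑ j, ∑ i, w j i * (z j * z i) := by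
    simp only [Lap, mul_sub, Finset.mul_sum]
    rw [Finset.sum_sub_distrib]
    congr 1
    · apply Finset.sum_congr rfl; intro j _; ring
    · apply Finset.sum_congr rfl; intro j _
      apply Finset.sum_congr rfl; intro i _; ring
  rw [e4, e1]
  simp only [Finset.sum_add_distrib, Finset.sum_sub_distrib]
  rw [e2, e3]
  have e5 : ∑ i, ∑ j, 2 * (w i j * (z i * z j)) = 2 * ∑ j, ∑ i, w j i * (z j * z i) := by
    simp only [Finset.mul_sum]
  rw [e5]
  ring

lemma Lap_quad_nonneg (h : Nice w) (z : V → ℝ) : 0 ≤ ∑ j, z j * Lap w z j := by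
  rw [Lap_quad h]
  have : ∀ i ∈ Finset.univ, (0:ℝ) ≤ ∑ j, w i j * (z i - z j)^2 := by
    intro i _
    exact Finset.sum_nonneg fun j _ => mul_nonneg (h.nonneg i j) (sq_nonneg _)
  have := Finset.sum_nonneg this
  linarith

lemma Lap_sub (z z' : V → ℝ) (j : V) :
    Lap w (fun i => z i - z' i) j = Lap w z j - Lap w z' j := by
  simp only [Lap, mul_sub, Finset.sum_sub_distrib]
  ring

lemma variational (h : Nice w) (x y z : V → ℝ) (hy : ∀ j, Lap w y j = x j) :
    2 * (∑ j, x j * z j) - ∑ j, z j * Lap w z j ≤ ∑ j, x j * y j := by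
  have h0 : 0 ≤ ∑ j, (y j - z j) * Lap w (fun i => y i - z i) j := Lap_quad_nonneg h _
  have e1 : ∑ j, (y j - z j) * Lap w (fun i => y i - z i) j =
      ∑ j, y j * Lap w y j - ∑ j, y j * Lap w z j - ∑ j, z j * Lap w y j
        + ∑ j, z j * Lap w z j := by
    simp only [Lap_sub]
    rw [← Finset.sum_sub_distrib, ← Finset.sum_sub_distrib, ← Finset.sum_add_distrib]
    apply Finset.sum_congr rfl; intro j _; ring
  have e2 : ∑ j, y j * Lap w y j = ∑ j, x j * y j := by
    apply Finset.sum_congr rfl; intro j _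
    rw [hy j]; ring
  have e3 : ∑ j, z j * Lap w y j = ∑ j, x j * z j := by
    apply Finset.sum_congr rfl; intro j _
    rw [hy j]; ring
  have e4 : ∑ j, y j * Lap w z j = ∑ j, x j * z j := by
    rw [Lap_symm_form h, e3]
  rw [e1, e2, e3, e4] at h0
  linarith

lemma commute_formula (h : Nice w) (a b : V) :
    walkM w a b + walkM w b a =
      wtot w * ((Hm w a a + Hm w b b) - (Hm w a b + Hm w b a)) := by
  have key : ∀ i j : V, walkM w i j = wtot w * (Hm w j j - Hm w i j) := by
    intro i j
    rw [walkM, pi_def, div_div_eq_mul_div, Hm, Hm, div_sub_div_same, mul_div_assoc']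
    ring
  rw [key, key]
  ring


end S15

namespace S15

variable {n : ℕ} {w : Fin n → Fin n → ℝ} {S : Finset (Fin n)}

lemma subW_sym (hsym : ∀ i j, w i j = w j i) (u v : {x // x ∈ S}) :
    subW w S u v = subW w S v u := by
  rw [subW, subW]
  by_cases hc : (u : Fin n) = (v : Fin n)
  · have huv : u = v := Subtype.ext hc
    subst huv
    rfl
  · rw [if_neg hc, if_neg (fun hh => hc hh.symm), hsym]

lemma subW_nonneg (hnonneg : ∀ i j, 0 ≤ w i j) (u v : {x // x ∈ S}) :
    0 ≤ subW w S u v := by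
  rw [subW]
  split
  · exact add_nonneg (hnonneg _ _) (Finset.sum_nonneg fun k _ => hnonneg _ _)
  · exact hnonneg _ _

lemma subW_deg (u : {x // x ∈ S}) : deg (subW w S) u = deg w ↑u := by
  classical
  set F : Fin n → ℝ :=
    fun j => if (u : Fin n) = j then w ↑u ↑u + ∑ k ∈ Sᶜ, w ↑u k else w ↑u j with hF
  have e0 : deg (subW w S) u = ∑ j ∈ S, F j := by
    rw [deg, ← Finset.sum_coe_sort S F]
    exact Finset.sum_congr rfl fun v _ => rfl
  have hu : (u : Fin n) ∈ S := u.2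
  have e1 : ∑ j ∈ S, F j = F ↑u + ∑ j ∈ S.erase ↑u, F j :=
    (Finset.add_sum_erase S F hu).symm
  have e2 : F ↑u = w ↑u ↑u + ∑ k ∈ Sᶜ, w ↑u k := by rw [hF]; simp
  have e3 : ∑ j ∈ S.erase ↑u, F j = ∑ j ∈ S.erase ↑u, w ↑u j := by
    apply Finset.sum_congr rfl
    intro j hj
    rw [hF]
    simp only
    rw [if_neg (fun hh => (Finset.mem_erase.mp hj).1 hh.symm)]
  have e4 : w ↑u ↑u + ∑ j ∈ S.erase ↑u, w ↑u j = ∑ j ∈ S, w ↑u j :=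
    Finset.add_sum_erase S (w ↑u) hu
  have e5 : ∑ j ∈ S, w ↑u j + ∑ j ∈ Sᶜ, w ↑u j = ∑ j, w ↑u j :=
    Finset.sum_add_sum_compl S (w ↑u)
  rw [e0, e1, e2, e3, deg]
  linarith

lemma subW_wtot : wtot (subW w S) = ∑ i ∈ S, ∑ j, w i j := by
  have e0 : wtot (subW w S) = ∑ u : {x // x ∈ S}, deg (subW w S) u := rfl
  rw [e0]
  simp only [subW_deg]
  rw [← Finset.sum_coe_sort S (fun i => ∑ j, w i j)]
  rfl

end S15

open S15 in
/-- Lemma 8: for a connected weighted undirected graph and a subset `S`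
containing `a` and `b` whose induced subgraph (with folded self-loops) is
connected, the mean commute times satisfy
`m_ab + m_ba ≤ (w/w(S)) (m̄_ab + m̄_ba)`. -/
theorem stmt_15 {n : ℕ}
    (w : Fin n → Fin n → ℝ)
    (hsym : ∀ i j, w i j = w j i)
    (hnonneg : ∀ i j, 0 ≤ w i j)
    -- the graph is connected
    (hconn : ∀ i j : Fin n, ∃ L, isPathOn (fun a b => 0 < w a b) i j L)
    -- the random walk on the graph is irreducible and aperiodic (primitive)
    (hprim : ∃ k : ℕ, 0 < k ∧ ∀ i j, 0 < (walkZ w ^ k) i j)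
    (a b : Fin n) (S : Finset (Fin n)) (ha : a ∈ S) (hb : b ∈ S)
    -- the subgraph with respect to S is connected, and its random walk is
    -- irreducible and aperiodic (primitive)
    (hsubconn : ∀ u v : {x // x ∈ S}, ∃ L,
      isPathOn (fun c d : {x // x ∈ S} => 0 < subW w S c d) u v L)
    (hsubprim : ∃ k : ℕ, 0 < k ∧ ∀ u v : {x // x ∈ S}, 0 < (walkZ (subW w S) ^ k) u v) :
    walkM w a b + walkM w b a ≤
      ((∑ i, ∑ j, w i j) / (∑ i ∈ S, ∑ j, w i j)) *
        (walkM (subW w S) ⟨a, ha⟩ ⟨b, hb⟩ + walkM (subW w S) ⟨b, hb⟩ ⟨a, ha⟩) := by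
  classical
  haveI : Nonempty (Fin n) := ⟨a⟩
  haveI : Nonempty {x // x ∈ S} := ⟨⟨a, ha⟩⟩
  have hW : Nice w := ⟨hsym, hnonneg, hprim⟩
  have hsub : Nice (subW w S) := ⟨subW_sym hsym, subW_nonneg hnonneg, hsubprim⟩
  by_cases hab : a = b
  · subst hab
    simp only [walkM, sub_self, zero_div, add_zero]
    have h1 : (0:ℝ) ≤ (∑ i, ∑ j, w i j) / (∑ i ∈ S, ∑ j, w i j) := by
      apply div_nonneg
      · exact Finset.sum_nonneg fun i _ => Finset.sum_nonneg fun j _ => hnonneg i j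
      · exact Finset.sum_nonneg fun i _ => Finset.sum_nonneg fun j _ => hnonneg i j
    nlinarith
  -- notation
  set y : Fin n → ℝ := fun i => Hm w i a - Hm w i b with hy
  set x : Fin n → ℝ :=
    fun j => (if a = j then 1 else 0) - (if b = j then 1 else 0) with hx
  have hLy : ∀ j, Lap w y j = x j := fun j => Lap_y hW a b j
  set Q : ℝ := ∑ j, x j * y j with hQ
  have hQy : Q = y a - y b := by
    rw [hQ, hx]
    simp [sub_mul, Finset.sum_sub_distrib, ite_mul, one_mul, zero_mul, Finset.sum_ite_eq]
  -- the subgraph side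
  set ab : {x // x ∈ S} := ⟨a, ha⟩
  set bb : {x // x ∈ S} := ⟨b, hb⟩
  set yb : {x // x ∈ S} → ℝ := fun u => Hm (subW w S) u ab - Hm (subW w S) u bb with hyb
  set xb : {x // x ∈ S} → ℝ :=
    fun u => (if ab = u then 1 else 0) - (if bb = u then 1 else 0) with hxb
  have hLyb : ∀ u, Lap (subW w S) yb u = xb u := fun u => Lap_y hsub ab bb u
  set Qb : ℝ := ∑ u, xb u * yb u with hQb
  -- commute time formulas
  have hwS : (0:ℝ) < ∑ i ∈ S, ∑ j, w i j := by
    rw [← subW_wtot]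
    exact wtot_pos hsub
  have LHS_eq : walkM w a b + walkM w b a = wtot w * Q := by
    rw [commute_formula hW a b, hQy, hy]
    simp only
    ring
  have RHS_eq : walkM (subW w S) ab bb + walkM (subW w S) bb ab = (∑ i ∈ S, ∑ j, w i j) * Qb := by
    rw [commute_formula hsub ab bb, ← subW_wtot]
    congr 1
    rw [hQb, hxb]
    simp [sub_mul, Finset.sum_sub_distrib, ite_mul, one_mul, zero_mul, Finset.sum_ite_eq, hyb]
    ring
  -- comparison of quadratic forms
  set z : {x // x ∈ S} → ℝ := fun u => y ↑u with hz
  have hxz : ∑ u, xb u * z u = Q := by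
    rw [hxb, hQy]
    simp [sub_mul, Finset.sum_sub_distrib, ite_mul, one_mul, zero_mul, Finset.sum_ite_eq, hz]
    rfl
  have hQform : Q = ∑ j, y j * Lap w y j := by
    rw [hQ]
    apply Finset.sum_congr rfl
    intro j _
    rw [hLy j]
    ring
  have hquad : ∑ u, z u * Lap (subW w S) z u ≤ Q := by
    rw [Lap_quad hsub, hQform, Lap_quad hW]
    have stepA : ∑ u : {x // x ∈ S}, ∑ v : {x // x ∈ S}, subW w S u v * (z u - z v)^2 =
        ∑ i ∈ S, ∑ j ∈ S, w i j * (y i - y j)^2 := by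
      have e1 : ∀ u v : {x // x ∈ S},
          subW w S u v * (z u - z v)^2 = w ↑u ↑v * (y ↑u - y ↑v)^2 := by
        intro u v
        by_cases hc : (u : Fin n) = (v : Fin n)
        · have huv : u = v := Subtype.ext hc
          subst huv
          simp
        · rw [subW, if_neg hc]
      simp only [e1]
      rw [← Finset.sum_coe_sort S (fun i => ∑ j ∈ S, w i j * (y i - y j)^2)]
      apply Finset.sum_congr rfl
      intro u _
      rw [← Finset.sum_coe_sort S (fun j => w ↑u j * (y ↑u - y j)^2)]
    rw [stepA]
    have stepB : ∑ i ∈ S, ∑ j ∈ S, w i j * (y i - y j)^2 ≤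
        ∑ i, ∑ j, w i j * (y i - y j)^2 := by
      have inner : ∀ i : Fin n, ∑ j ∈ S, w i j * (y i - y j)^2 ≤
          ∑ j, w i j * (y i - y j)^2 := by
        intro i
        apply Finset.sum_le_sum_of_subset_of_nonneg (Finset.subset_univ S)
        intro j _ _
        exact mul_nonneg (hnonneg i j) (sq_nonneg _)
      calc ∑ i ∈ S, ∑ j ∈ S, w i j * (y i - y j)^2
          ≤ ∑ i ∈ S, ∑ j, w i j * (y i - y j)^2 :=
            Finset.sum_le_sum fun i _ => inner i
        _ ≤ ∑ i, ∑ j, w i j * (y i - y j)^2 := by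
            apply Finset.sum_le_sum_of_subset_of_nonneg (Finset.subset_univ S)
            intro i _ _
            exact Finset.sum_nonneg fun j _ => mul_nonneg (hnonneg i j) (sq_nonneg _)
    linarith
  have hvar : 2 * (∑ u, xb u * z u) - ∑ u, z u * Lap (subW w S) z u ≤ Qb :=
    variational hsub xb yb z hLyb
  have hQQb : Q ≤ Qb := by
    rw [hxz] at hvar
    linarith
  -- conclude
  rw [LHS_eq, RHS_eq]
  have key : ((∑ i, ∑ j, w i j) / (∑ i ∈ S, ∑ j, w i j)) * ((∑ i ∈ S, ∑ j, w i j) * Qb) =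
      wtot w * Qb := by
    have hA : (∑ i, ∑ j, w i j) = wtot w := rfl
    rw [hA]
    field_simp
  rw [key]
  exact mul_le_mul_of_nonneg_left hQQb (wtot_pos hW).le
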